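/- Let (B, ¯(), ⊕, ·, 1) be an IMM algebra. Then for all a, b, c ∈ B: (1) a⊕(b⊕c) = (a⊕b)⊕(a⊕c); (2) ¯(1̄⊕1) = 1̄⊕1; (3) if ā = a then a = 1̄⊕1; (4) (1̄⊕1)·a = 1̄⊕a; (5) (1̄⊕1)·a = a·(1̄⊕1). -/
import Mathlib


/-- An involutive medial monoid (IMM) algebra. -/
structure IMM (B : Type*) where
  inv : B → B
  oplus : B → B → B
  mul : B → B → B
  one : B
  B1 : ∀ a, oplus a a = a
  B2 : ∀ a b, oplus a b = oplus b a
  B3 : ∀ a b c d, oplus (oplus a b) (oplus c d) = oplus (oplus a c) (oplus b d)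
  B4 : ∀ a b c, mul a (mul b c) = mul (mul a b) c
  B5 : ∀ a, mul a one = a
  B5' : ∀ a, mul one a = a
  B6 : ∀ a b c, mul a (oplus b c) = oplus (mul a b) (mul a c)
  B6' : ∀ a b c, mul (oplus a b) c = oplus (mul a c) (mul b c)
  B7 : ∀ a, inv (inv a) = a
  B8 : ∀ a b, inv (oplus a b) = oplus (inv a) (inv b)
  B9 : ∀ a, mul a (inv one) = inv one
  B9' : ∀ a, mul (inv one) a = inv one
  B10 : ∀ a, oplus (inv a) a = oplus (inv one) one

/-- Proposition 4.5: properties (IMMP1)-(IMMP5) of an IMM algebra. -/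
theorem IMM_props {B : Type*} (I : IMM B) (a b c : B) :
    I.oplus a (I.oplus b c) = I.oplus (I.oplus a b) (I.oplus a c) ∧
    I.inv (I.oplus (I.inv I.one) I.one) = I.oplus (I.inv I.one) I.one ∧
    (I.inv a = a → a = I.oplus (I.inv I.one) I.one) ∧
    I.mul (I.oplus (I.inv I.one) I.one) a = I.oplus (I.inv I.one) a ∧
    I.mul (I.oplus (I.inv I.one) I.one) a =
      I.mul a (I.oplus (I.inv I.one) I.one) := by
  refine ⟨?_, ?_, ?_, ?_, ?_⟩
  · rw [← I.B1 a]; rw [I.B3]; rw [I.B1]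
  · rw [I.B8, I.B7, I.B2]
  · intro h; rw [← I.B10 a, h, I.B1]
  · rw [I.B6', I.B9', I.B5']
  · rw [I.B6', I.B9', I.B5', I.B6, I.B9, I.B5]
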